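/- For every coupling Hamiltonian H_c = ∑_{α,β∈{x,y,z}} J_{αβ} I_α S_β with real coefficients J_{αβ}, there exists a local unitary K ∈ SU(2)⊗SU(2) and real numbers a_x ≥ a_y ≥ |a_z| such that K H_c K† = a_x I_xS_x + a_y I_yS_y + a_z I_zS_z. -/

import Mathlib

set_option maxHeartbeats 1600000
set_option linter.unreachableTactic false
set_option linter.unusedTactic false


open Matrix Kronecker

noncomputable def pauli : Fin 3 → Matrix (Fin 2) (Fin 2) ℂ
  | 0 => (1 / 2 : ℂ) • !![0, 1; 1, 0]
  | 1 => (1 / 2 : ℂ) • !![0, -Complex.I; Complex.I, 0]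
  | 2 => (1 / 2 : ℂ) • !![1, 0; 0, -1]

namespace CHD
open Complex



noncomputable def Kz (a b : ℝ) : Matrix (Fin 2) (Fin 2) ℂ :=
  !![(a:ℂ) - b*I, 0; 0, (a:ℂ) + b*I]

noncomputable def Ky (a b : ℝ) : Matrix (Fin 2) (Fin 2) ℂ :=
  !![(a:ℂ), -(b:ℂ); (b:ℂ), (a:ℂ)]

def Rz (c s : ℝ) : Matrix (Fin 3) (Fin 3) ℝ := !![c,-s,0; s,c,0; 0,0,1]
def Ry (c s : ℝ) : Matrix (Fin 3) (Fin 3) ℝ := !![c,0,s; 0,1,0; -s,0,c]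

def Lifts (K : Matrix (Fin 2) (Fin 2) ℂ) (R : Matrix (Fin 3) (Fin 3) ℝ) : Prop :=
  K ∈ Matrix.unitaryGroup (Fin 2) ℂ ∧ K.det = 1 ∧
  ∀ α, K * pauli α * Kᴴ = ∑ γ, (R γ α) • pauli γ

lemma KzH (a b : ℝ) : (Kz a b)ᴴ = Kz a (-b) := by
  ext i j
  fin_cases i <;> fin_cases j <;>
    simp [Kz, Matrix.conjTranspose_apply, Complex.ext_iff]

lemma KyH (a b : ℝ) : (Ky a b)ᴴ = Ky a (-b) := by
  ext i j
  fin_cases i <;> fin_cases j <;>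
    simp [Ky, Matrix.conjTranspose_apply, Complex.ext_iff]

lemma lifts_Kz (a b : ℝ) (h : a^2 + b^2 = 1) :
    Lifts (Kz a b) (Rz (a^2-b^2) (2*a*b)) := by
  refine ⟨?_, ?_, ?_⟩
  · rw [Matrix.mem_unitaryGroup_iff]
    show Kz a b * (Kz a b)ᴴ = 1
    rw [KzH]
    ext i j
    fin_cases i <;> fin_cases j <;>
      simp [Kz, Matrix.mul_apply, Fin.sum_univ_two, Complex.ext_iff] <;>
      ring_nf <;> (try simp only [← Complex.ofReal_pow, Complex.ofReal_re, Complex.ofReal_im]) <;> first | (constructor <;> first | trivial | linarith [h]) | linarith [h]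
  · simp only [Kz, Matrix.det_fin_two_of, Complex.ext_iff]
    ring_nf
    simp [Complex.ext_iff]
    constructor <;> ring_nf <;> (try simp only [← Complex.ofReal_pow, Complex.ofReal_re, Complex.ofReal_im]) <;> first | (constructor <;> first | trivial | linarith [h]) | linarith [h]
  · intro α
    rw [show (Kz a b)ᴴ = Kz a (-b) from KzH a b]
    fin_cases α <;>
    · rw [Fin.sum_univ_three]
      ext i j
      fin_cases i <;> fin_cases j <;>
        simp [Kz, Rz, pauli, Matrix.mul_apply, Fin.sum_univ_two, Complex.ext_iff] <;>
        ring_nf <;> (try simp only [← Complex.ofReal_pow, Complex.ofReal_re, Complex.ofReal_im]) <;> first | (constructor <;> first | trivial | linarith [h] | ring) | linarith [h] | ring | trivial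

lemma lifts_Ky (a b : ℝ) (h : a^2 + b^2 = 1) :
    Lifts (Ky a b) (Ry (a^2-b^2) (2*a*b)) := by
  refine ⟨?_, ?_, ?_⟩
  · rw [Matrix.mem_unitaryGroup_iff]
    show Ky a b * (Ky a b)ᴴ = 1
    rw [KyH]
    ext i j
    fin_cases i <;> fin_cases j <;>
      simp [Ky, Matrix.mul_apply, Fin.sum_univ_two, Complex.ext_iff] <;>
      ring_nf <;> (try simp only [← Complex.ofReal_pow, Complex.ofReal_re, Complex.ofReal_im]) <;> first | (constructor <;> first | trivial | linarith [h]) | linarith [h]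
  · simp only [Ky, Matrix.det_fin_two_of, Complex.ext_iff]
    ring_nf
    simp [Complex.ext_iff]
    constructor <;> ring_nf <;> (try simp only [← Complex.ofReal_pow, Complex.ofReal_re, Complex.ofReal_im]) <;> first | (constructor <;> first | trivial | linarith [h]) | linarith [h]
  · intro α
    rw [show (Ky a b)ᴴ = Ky a (-b) from KyH a b]
    fin_cases α <;>
    · rw [Fin.sum_univ_three]
      ext i j
      fin_cases i <;> fin_cases j <;>
        simp [Ky, Ry, pauli, Matrix.mul_apply, Fin.sum_univ_two, Complex.ext_iff] <;>
        ring_nf <;> (try simp only [← Complex.ofReal_pow, Complex.ofReal_re, Complex.ofReal_im]) <;> first | (constructor <;> first | trivial | linarith [h] | ring) | linarith [h] | ring | trivial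

lemma lifts_mul {K L R S} (hK : Lifts K R) (hL : Lifts L S) : Lifts (K * L) (R * S) := by
  obtain ⟨hKu, hKd, hKc⟩ := hK
  obtain ⟨hLu, hLd, hLc⟩ := hL
  refine ⟨mul_mem hKu hLu, by rw [Matrix.det_mul, hKd, hLd, one_mul], fun α => ?_⟩
  have : K * L * pauli α * (K * L)ᴴ = K * (L * pauli α * Lᴴ) * Kᴴ := by
    rw [Matrix.conjTranspose_mul]; noncomm_ring
  rw [this, hLc α, Matrix.mul_sum, Matrix.sum_mul]
  have step : ∀ γ, K * (S γ α • pauli γ) * Kᴴ = ∑ δ, (R δ γ * S γ α) • pauli δ := by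
    intro γ
    rw [Matrix.mul_smul, Matrix.smul_mul, hKc γ, Finset.smul_sum]
    exact Finset.sum_congr rfl fun δ _ => by rw [smul_smul, mul_comm]
  calc ∑ γ, K * (S γ α • pauli γ) * Kᴴ = ∑ γ, ∑ δ, (R δ γ * S γ α) • pauli δ := by
        exact Finset.sum_congr rfl fun γ _ => step γ
    _ = ∑ δ, (∑ γ, R δ γ * S γ α) • pauli δ := by
        rw [Finset.sum_comm]
        exact Finset.sum_congr rfl fun δ _ => by rw [Finset.sum_smul]
    _ = ∑ δ, ((R * S) δ α) • pauli δ := by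
        exact Finset.sum_congr rfl fun δ _ => by rw [Matrix.mul_apply]

lemma half_angle (c s : ℝ) (h : c^2 + s^2 = 1) :
    ∃ a b : ℝ, a^2 + b^2 = 1 ∧ a^2 - b^2 = c ∧ 2*a*b = s := by
  rcases eq_or_ne c (-1) with hc | hc
  · refine ⟨0, 1, by norm_num, by norm_num [hc], by nlinarith⟩
  · have h1 : 1 + c > 0 := by
      rcases lt_or_ge (1 + c) 0 with h' | h'
      · nlinarith
      · rcases h'.eq_or_lt with h'' | h''
        · exact absurd (by linarith) hc
        · exact h''
    set a := Real.sqrt ((1 + c)/2) with ha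
    have ha2 : a^2 = (1 + c)/2 := Real.sq_sqrt (by linarith)
    have hapos : a > 0 := Real.sqrt_pos.mpr (by linarith)
    refine ⟨a, s / (2*a), ?_, ?_, ?_⟩
    · field_simp
      nlinarith
    · field_simp
      nlinarith
    · field_simp


lemma Rz_transpose (c s : ℝ) : (Rz c s)ᵀ = Rz c (-s) := by
  ext i j
  fin_cases i <;> fin_cases j <;> simp [Rz, Matrix.transpose_apply]

lemma Ry_transpose (c s : ℝ) : (Ry c s)ᵀ = Ry c (-s) := by
  ext i j
  fin_cases i <;> fin_cases j <;> simp [Ry, Matrix.transpose_apply]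

lemma Rz_orth {c s : ℝ} (h : c^2+s^2 = 1) : (Rz c s)ᵀ * Rz c s = 1 := by
  rw [Rz_transpose]
  ext i j
  fin_cases i <;> fin_cases j <;>
    simp [Rz, Matrix.mul_apply, Fin.sum_univ_three, Matrix.one_apply] <;> nlinarith [h]

lemma Ry_orth {c s : ℝ} (h : c^2+s^2 = 1) : (Ry c s)ᵀ * Ry c s = 1 := by
  rw [Ry_transpose]
  ext i j
  fin_cases i <;> fin_cases j <;>
    simp [Ry, Matrix.mul_apply, Fin.sum_univ_three, Matrix.one_apply] <;> nlinarith [h]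

lemma Rz_det {c s : ℝ} (h : c^2+s^2 = 1) : (Rz c s).det = 1 := by
  simp [Rz, Matrix.det_fin_three]; nlinarith [h]

lemma Ry_det {c s : ℝ} (h : c^2+s^2 = 1) : (Ry c s).det = 1 := by
  simp [Ry, Matrix.det_fin_three]; nlinarith [h]

lemma euler (R : Matrix (Fin 3) (Fin 3) ℝ) (hR : Rᵀ * R = 1) (hd : R.det = 1) :
    ∃ c₁ s₁ c₂ s₂ c₃ s₃ : ℝ, c₁^2+s₁^2 = 1 ∧ c₂^2+s₂^2 = 1 ∧ c₃^2+s₃^2 = 1 ∧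
      R = Rz c₁ s₁ * Ry c₂ s₂ * Rz c₃ s₃ := by
  obtain ⟨c₂, hc₂z⟩ : ∃ c, c = R 2 2 := ⟨_, rfl⟩
  have hcol : (R 0 2)^2 + (R 1 2)^2 + c₂^2 = 1 := by
    have h22 := congrFun (congrFun hR 2) 2
    simp [Matrix.mul_apply, Fin.sum_univ_three, Matrix.one_apply] at h22
    rw [hc₂z]
    nlinarith [h22]
  obtain ⟨s₂, hs₂def⟩ : ∃ s, s = Real.sqrt ((R 0 2)^2 + (R 1 2)^2) := ⟨_, rfl⟩
  have hs₂sq : s₂^2 = (R 0 2)^2 + (R 1 2)^2 := by rw [hs₂def]; exact Real.sq_sqrt (by positivity)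
  have hs₂nn : 0 ≤ s₂ := hs₂def ▸ Real.sqrt_nonneg _
  have hc₂ : c₂^2 + s₂^2 = 1 := by rw [hs₂sq]; linarith [hcol]
  obtain ⟨c₁, s₁, key1, key2, key3⟩ :
      ∃ c₁ s₁ : ℝ, c₁^2 + s₁^2 = 1 ∧ c₁ * s₂ = R 0 2 ∧ s₁ * s₂ = R 1 2 := by
    rcases eq_or_ne s₂ 0 with hs | hs
    · rw [hs] at hs₂sq
      have hx0 : R 0 2 = 0 := by nlinarith [sq_nonneg (R 0 2), sq_nonneg (R 1 2)]
      have hy0 : R 1 2 = 0 := by nlinarith [sq_nonneg (R 0 2), sq_nonneg (R 1 2)]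
      exact ⟨1, 0, by norm_num, by rw [hs, hx0]; ring, by rw [hs, hy0]; ring⟩
    · refine ⟨R 0 2 / s₂, R 1 2 / s₂, ?_, by field_simp, by field_simp⟩
      field_simp
      linarith [hs₂sq]
  obtain ⟨A, hAdef⟩ : ∃ A, A = Rz c₁ s₁ * Ry c₂ s₂ := ⟨_, rfl⟩
  have hAo : Aᵀ * A = 1 := by
    rw [hAdef, Matrix.transpose_mul, Matrix.mul_assoc, ← Matrix.mul_assoc (Rz c₁ s₁)ᵀ,
      Rz_orth key1, Matrix.one_mul, Ry_orth hc₂]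
  have hAo' : A * Aᵀ = 1 := mul_eq_one_comm.mp hAo
  obtain ⟨Q, hQdef⟩ : ∃ Q, Q = Aᵀ * R := ⟨_, rfl⟩
  have hAQ : A * Q = R := by rw [hQdef, ← Matrix.mul_assoc, hAo', Matrix.one_mul]
  have hQo : Qᵀ * Q = 1 := by
    rw [hQdef, Matrix.transpose_mul, Matrix.transpose_transpose, Matrix.mul_assoc,
      ← Matrix.mul_assoc A, hAo', Matrix.one_mul, hR]
  have hQo' : Q * Qᵀ = 1 := mul_eq_one_comm.mp hQo
  have hQd : Q.det = 1 := by
    have hAd : A.det = 1 := by rw [hAdef, Matrix.det_mul, Rz_det key1, Ry_det hc₂, one_mul]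
    rw [hQdef, Matrix.det_mul, Matrix.det_transpose, hAd, one_mul, hd]
  have hA : A = !![c₁*c₂, -s₁, c₁*s₂; s₁*c₂, c₁, s₁*s₂; -s₂, 0, c₂] := by
    rw [hAdef]
    ext i j
    fin_cases i <;> fin_cases j <;>
      simp [Rz, Ry, Matrix.mul_apply, Fin.sum_univ_three] <;> ring
  have hQe : ∀ i, Q i 2 = A 0 i * R 0 2 + A 1 i * R 1 2 + A 2 i * R 2 2 := by
    intro i
    rw [hQdef]
    simp [Matrix.mul_apply, Fin.sum_univ_three]
  have hQ02 : Q 0 2 = 0 := by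
    rw [hQe 0, hA, ← key2, ← key3, ← hc₂z]
    simp
    linear_combination c₂ * s₂ * key1
  have hQ12 : Q 1 2 = 0 := by
    rw [hQe 1, hA, ← key2, ← key3, ← hc₂z]
    simp
    ring
  have hQ22 : Q 2 2 = 1 := by
    rw [hQe 2, hA, ← key2, ← key3, ← hc₂z]
    simp
    linear_combination s₂^2 * key1 + hc₂
  have hrow := congrFun (congrFun hQo' 2) 2
  simp [Matrix.mul_apply, Fin.sum_univ_three, Matrix.one_apply, hQ22] at hrow
  have hQ20 : Q 2 0 = 0 := by nlinarith [hrow, sq_nonneg (Q 2 0), sq_nonneg (Q 2 1)]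
  have hQ21 : Q 2 1 = 0 := by nlinarith [hrow, sq_nonneg (Q 2 0), sq_nonneg (Q 2 1)]
  have hab : (Q 0 0)^2 + (Q 1 0)^2 = 1 := by
    have h00 := congrFun (congrFun hQo 0) 0
    simp [Matrix.mul_apply, Fin.sum_univ_three, Matrix.one_apply, hQ20] at h00
    nlinarith [h00]
  have horth : Q 0 0 * Q 0 1 + Q 1 0 * Q 1 1 = 0 := by
    have h01 := congrFun (congrFun hQo 0) 1
    simp [Matrix.mul_apply, Fin.sum_univ_three, Matrix.one_apply, hQ20, hQ21] at h01
    linarith [h01]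
  have hdet2 : Q 0 0 * Q 1 1 - Q 0 1 * Q 1 0 = 1 := by
    have hQd' := hQd
    rw [Matrix.det_fin_three, hQ02, hQ12, hQ20, hQ21, hQ22] at hQd'
    linarith [hQd']
  have hQ11 : Q 1 1 = Q 0 0 := by
    linear_combination -(Q 1 1) * hab + (Q 0 0) * hdet2 + (Q 1 0) * horth
  have hQ01 : Q 0 1 = -(Q 1 0) := by
    linear_combination (Q 0 0) * horth - (Q 1 0) * hdet2 - (Q 0 1) * hab
  have hQ : Q = Rz (Q 0 0) (Q 1 0) := by
    ext i j
    fin_cases i <;> fin_cases j <;>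
      simp [Rz, hQ02, hQ12, hQ20, hQ21, hQ22, hQ11, hQ01]
  refine ⟨c₁, s₁, c₂, s₂, Q 0 0, Q 1 0, key1, hc₂, hab, ?_⟩
  rw [← hAQ, hAdef]
  congr 1


lemma svd3 (J : Matrix (Fin 3) (Fin 3) ℝ) :
    ∃ (R₁ R₂ : Matrix (Fin 3) (Fin 3) ℝ) (a : Fin 3 → ℝ),
      R₁ᵀ * R₁ = 1 ∧ R₁.det = 1 ∧ R₂ᵀ * R₂ = 1 ∧ R₂.det = 1 ∧
      a 0 ≥ a 1 ∧ a 1 ≥ |a 2| ∧ R₁ * J * R₂ᵀ = Matrix.diagonal a := by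
  classical
  have hA : (Jᴴ * J).IsHermitian := Matrix.isHermitian_conjTranspose_mul_self J
  have hJT : Jᴴ = Jᵀ := Matrix.conjTranspose_eq_transpose_of_trivial J
  have hPSD : (Jᴴ * J).PosSemidef := Matrix.posSemidef_conjTranspose_mul_self J
  set μ := hA.eigenvalues with hμ
  have hμnn : ∀ i, 0 ≤ μ i := hPSD.eigenvalues_nonneg
  set p := Tuple.sort (fun i => -(μ i)) with hp
  have hmono : Monotone ((fun i => -(μ i)) ∘ p) := Tuple.monotone_sort _
  set B := hA.eigenvectorBasis.reindex p.symm with hB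
  have hBv : ∀ i, (Jᴴ * J) *ᵥ ⇑(B i) = μ (p i) • ⇑(B i) := by
    intro i
    rw [hB, OrthonormalBasis.reindex_apply, Equiv.symm_symm]
    exact hA.mulVec_eigenvectorBasis (p i)
  set Bv : Fin 3 → (Fin 3 → ℝ) := fun i => ⇑(B i) with hBvdef
  set σ : Fin 3 → ℝ := fun i => Real.sqrt (μ (p i)) with hσ
  have hσnn : ∀ i, 0 ≤ σ i := fun i => Real.sqrt_nonneg _
  have hσsq : ∀ i, σ i ^ 2 = μ (p i) := fun i => Real.sq_sqrt (hμnn _)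
  have hσord : σ 1 ≤ σ 0 ∧ σ 2 ≤ σ 1 := by
    constructor <;>
    · apply Real.sqrt_le_sqrt
      have := hmono (by decide : ((0:Fin 3) ≤ 1)) |>.trans_eq rfl
      have h2 := hmono (by decide : ((1:Fin 3) ≤ 2))
      simp only [Function.comp_apply, neg_le_neg_iff] at this h2
      first | linarith [this] | linarith [h2]
  -- dot products of images
  have hdotB : ∀ i j : Fin 3, Bv i ⬝ᵥ Bv j = if i = j then 1 else 0 := by
    intro i j
    have h := orthonormal_iff_ite.mp B.orthonormal i j
    rw [← h]
    simp [hBvdef, PiLp.inner_apply, dotProduct, mul_comm]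
  have hdot : ∀ i j : Fin 3, (J *ᵥ Bv i) ⬝ᵥ (J *ᵥ Bv j) = μ (p j) * (if i = j then 1 else 0) := by
    intro i j
    have hBv' : (Jᴴ * J) *ᵥ Bv j = μ (p j) • Bv j := hBv j
    calc (J *ᵥ Bv i) ⬝ᵥ (J *ᵥ Bv j)
        = Bv i ⬝ᵥ (Jᵀ *ᵥ (J *ᵥ Bv j)) := by
          rw [dotProduct_comm, Matrix.mulVec_transpose, Matrix.dotProduct_mulVec,
            dotProduct_comm]
      _ = Bv i ⬝ᵥ ((Jᴴ * J) *ᵥ Bv j) := by rw [Matrix.mulVec_mulVec, hJT]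
      _ = μ (p j) * (Bv i ⬝ᵥ Bv j) := by rw [hBv', dotProduct_smul]; rfl
      _ = μ (p j) * (if i = j then 1 else 0) := by rw [hdotB]
  -- the candidate left singular vectors
  set w : Fin 3 → EuclideanSpace ℝ (Fin 3) := fun i => (σ i)⁻¹ • WithLp.toLp 2 (J *ᵥ Bv i) with hw
  have hworth : Orthonormal ℝ (Set.restrict {i | σ i ≠ 0} w) := by
    rw [orthonormal_iff_ite]
    rintro ⟨i, hi⟩ ⟨j, hj⟩
    have : (inner ℝ (w i) (w j) : ℝ) = (σ i)⁻¹ * (σ j)⁻¹ * ((J *ᵥ Bv i) ⬝ᵥ (J *ᵥ Bv j)) := by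
      simp [hw, PiLp.inner_apply, dotProduct, Finset.mul_sum]
      exact Finset.sum_congr rfl fun k _ => by ring
    change inner ℝ (w i) (w j) = _
    rw [this, hdot]
    by_cases hij : i = j
    · subst hij
      simp only [if_true, eq_self_iff_true, if_pos trivial]
      rw [mul_one, ← hσsq i, sq]
      have hi' : σ i ≠ 0 := hi
      field_simp
    · simp [hij]
  obtain ⟨bU, hbU⟩ := hworth.exists_orthonormalBasis_extension_of_card_eq
    (by simp [finrank_euclideanSpace])
  set bUv : Fin 3 → (Fin 3 → ℝ) := fun i => ⇑(bU i) with hbUvdef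
  have key : ∀ i, J *ᵥ Bv i = σ i • bUv i := by
    intro i
    by_cases hi : σ i ≠ 0
    · have h1 : bUv i = ⇑(w i) := by rw [hbUvdef]; simp only; rw [hbU i hi]
      rw [h1, hw]
      show J *ᵥ Bv i = σ i • (σ i)⁻¹ • (J *ᵥ Bv i)
      rw [smul_smul, mul_inv_cancel₀ hi, one_smul]
    · push_neg at hi
      have hμ0 : μ (p i) = 0 := by rw [← hσsq i, hi]; ring
      have h0 : (J *ᵥ Bv i) ⬝ᵥ (J *ᵥ Bv i) = 0 := by rw [hdot i i, hμ0]; simp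
      rw [dotProduct_self_eq_zero] at h0
      rw [h0, hi, zero_smul]
  -- matrices
  set V : Matrix (Fin 3) (Fin 3) ℝ := Matrix.of fun r c => Bv c r with hV
  set U : Matrix (Fin 3) (Fin 3) ℝ := Matrix.of fun r c => bUv c r with hU
  have hdotU : ∀ i j : Fin 3, bUv i ⬝ᵥ bUv j = if i = j then 1 else 0 := by
    intro i j
    have h := orthonormal_iff_ite.mp bU.orthonormal i j
    rw [← h]
    simp [hbUvdef, PiLp.inner_apply, dotProduct, mul_comm]
  have hVo : Vᵀ * V = 1 := by
    ext i j
    simp only [Matrix.mul_apply, Matrix.transpose_apply, hV, Matrix.of_apply, Matrix.one_apply]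
    rw [← hdotB i j]
    rfl
  have hUo : Uᵀ * U = 1 := by
    ext i j
    simp only [Matrix.mul_apply, Matrix.transpose_apply, hU, Matrix.of_apply, Matrix.one_apply]
    rw [← hdotU i j]
    rfl
  have hJV : J * V = U * Matrix.diagonal σ := by
    ext r c
    rw [Matrix.mul_diagonal]
    have h := congrFun (key c) r
    simp only [Matrix.mulVec, dotProduct, Pi.smul_apply, smul_eq_mul] at h
    simp only [Matrix.mul_apply, hV, hU, Matrix.of_apply]
    rw [h]
    ring
  -- determinants
  have hUdet2 : U.det * U.det = 1 := by
    have h := congrArg Matrix.det hUo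
    rwa [Matrix.det_mul, Matrix.det_transpose, Matrix.det_one] at h
  have hVdet2 : V.det * V.det = 1 := by
    have h := congrArg Matrix.det hVo
    rwa [Matrix.det_mul, Matrix.det_transpose, Matrix.det_one] at h
  have hUo' : U * Uᵀ = 1 := mul_eq_one_comm.mp hUo
  have hVo' : V * Vᵀ = 1 := mul_eq_one_comm.mp hVo
  set Du : Matrix (Fin 3) (Fin 3) ℝ := Matrix.diagonal ![1, 1, U.det] with hDu
  set Dv : Matrix (Fin 3) (Fin 3) ℝ := Matrix.diagonal ![1, 1, V.det] with hDv
  have hDuDu : Du * Du = 1 := by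
    rw [hDu, Matrix.diagonal_mul_diagonal, ← Matrix.diagonal_one]
    exact congrArg Matrix.diagonal (funext fun i => by fin_cases i <;> simp [hUdet2])
  have hDvDv : Dv * Dv = 1 := by
    rw [hDv, Matrix.diagonal_mul_diagonal, ← Matrix.diagonal_one]
    exact congrArg Matrix.diagonal (funext fun i => by fin_cases i <;> simp [hVdet2])
  have hDuT : Duᵀ = Du := Matrix.diagonal_transpose _
  have hDvT : Dvᵀ = Dv := Matrix.diagonal_transpose _
  have horder1 : σ 1 ≤ σ 0 := hσord.1
  have horder2 : σ 2 ≤ σ 1 := hσord.2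
  obtain ⟨hdu⟩ : ∃ _ : True, True := ⟨trivial, trivial⟩
  have hduc : U.det = 1 ∨ U.det = -1 := mul_self_eq_one_iff.mp hUdet2
  have hdvc : V.det = 1 ∨ V.det = -1 := mul_self_eq_one_iff.mp hVdet2
  refine ⟨Du * Uᵀ, Dv * Vᵀ, ![σ 0, σ 1, U.det * V.det * σ 2], ?_, ?_, ?_, ?_, ?_, ?_, ?_⟩
  · rw [Matrix.transpose_mul, Matrix.transpose_transpose, hDuT, Matrix.mul_assoc,
      ← Matrix.mul_assoc Du, hDuDu, Matrix.one_mul, hUo']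
  · rw [Matrix.det_mul, Matrix.det_transpose, hDu, Matrix.det_diagonal]
    simp [Fin.prod_univ_three, hUdet2]
  · rw [Matrix.transpose_mul, Matrix.transpose_transpose, hDvT, Matrix.mul_assoc,
      ← Matrix.mul_assoc Dv, hDvDv, Matrix.one_mul, hVo']
  · rw [Matrix.det_mul, Matrix.det_transpose, hDv, Matrix.det_diagonal]
    simp [Fin.prod_univ_three, hVdet2]
  · simpa using horder1
  · have habs : |U.det * V.det * σ 2| = σ 2 := by
      rcases hduc with h1 | h1 <;> rcases hdvc with h2 | h2 <;>
        rw [h1, h2] <;> simp [_root_.abs_of_nonneg (hσnn 2)]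
    simpa [habs] using horder2
  · have h1 : Uᵀ * (J * V) = Matrix.diagonal σ := by
      rw [hJV, ← Matrix.mul_assoc, hUo, Matrix.one_mul]
    have h2 : Du * Uᵀ * J * (Dv * Vᵀ)ᵀ = Du * (Uᵀ * (J * V)) * Dv := by
      rw [Matrix.transpose_mul, Matrix.transpose_transpose, hDvT]
      noncomm_ring
    rw [h2, h1, hDu, hDv, Matrix.diagonal_mul_diagonal, Matrix.diagonal_mul_diagonal]
    exact congrArg Matrix.diagonal (funext fun i => by fin_cases i <;> simp <;> ring)


lemma kron_conjT (A B : Matrix (Fin 2) (Fin 2) ℂ) : (A ⊗ₖ B)ᴴ = Aᴴ ⊗ₖ Bᴴ := by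
  ext i j
  simp [Matrix.conjTranspose_apply, Matrix.kroneckerMap_apply, mul_comm]

lemma sum_kron {n : ℕ} (f : Fin n → Matrix (Fin 2) (Fin 2) ℂ) (B : Matrix (Fin 2) (Fin 2) ℂ) :
    (∑ i, f i) ⊗ₖ B = ∑ i, (f i ⊗ₖ B) := by
  ext j k
  simp [Matrix.kroneckerMap_apply, Finset.sum_apply, Matrix.sum_apply, Finset.sum_mul]

lemma kron_sum {n : ℕ} (A : Matrix (Fin 2) (Fin 2) ℂ) (f : Fin n → Matrix (Fin 2) (Fin 2) ℂ) :
    A ⊗ₖ (∑ i, f i) = ∑ i, (A ⊗ₖ f i) := by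
  ext j k
  simp [Matrix.kroneckerMap_apply, Finset.sum_apply, Matrix.sum_apply, Finset.mul_sum]


lemma exists_lift (R : Matrix (Fin 3) (Fin 3) ℝ) (hR : Rᵀ * R = 1) (hd : R.det = 1) :
    ∃ K, Lifts K R := by
  obtain ⟨c₁,s₁,c₂,s₂,c₃,s₃,h1,h2,h3,hdec⟩ := euler R hR hd
  obtain ⟨a₁,b₁,ha1,hc1,hs1⟩ := half_angle c₁ s₁ h1
  obtain ⟨a₂,b₂,ha2,hc2,hs2⟩ := half_angle c₂ s₂ h2
  obtain ⟨a₃,b₃,ha3,hc3,hs3⟩ := half_angle c₃ s₃ h3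
  refine ⟨Kz a₁ b₁ * Ky a₂ b₂ * Kz a₃ b₃, ?_⟩
  rw [hdec, ← hc1, ← hs1, ← hc2, ← hs2, ← hc3, ← hs3]
  exact lifts_mul (lifts_mul (lifts_Kz a₁ b₁ ha1) (lifts_Ky a₂ b₂ ha2)) (lifts_Kz a₃ b₃ ha3)

end CHD

/-- every coupling Hamiltonian `H_c = ∑ J_{αβ} I_α S_β` can be diagonalized by a
local unitary `K = K₁ ⊗ K₂ ∈ SU(2) ⊗ SU(2)`:
`K H_c K† = a_x I_xS_x + a_y I_yS_y + a_z I_zS_z` with `a_x ≥ a_y ≥ |a_z|`. -/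
theorem coupling_hamiltonian_diagonalization (J : Fin 3 → Fin 3 → ℝ) :
    ∃ K₁ K₂ : Matrix (Fin 2) (Fin 2) ℂ,
      K₁ ∈ Matrix.unitaryGroup (Fin 2) ℂ ∧ K₁.det = 1 ∧
      K₂ ∈ Matrix.unitaryGroup (Fin 2) ℂ ∧ K₂.det = 1 ∧
      ∃ a : Fin 3 → ℝ, a 0 ≥ a 1 ∧ a 1 ≥ |a 2| ∧
        (K₁ ⊗ₖ K₂) * (∑ α, ∑ β, J α β • (pauli α ⊗ₖ pauli β)) * (K₁ ⊗ₖ K₂)ᴴ =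
          ∑ α, a α • (pauli α ⊗ₖ pauli α) := by
  obtain ⟨R₁, R₂, a, hR₁o, hR₁d, hR₂o, hR₂d, ha01, ha12, hdiag⟩ := CHD.svd3 (Matrix.of J)
  obtain ⟨K₁, hK₁u, hK₁d, hK₁c⟩ := CHD.exists_lift R₁ hR₁o hR₁d
  obtain ⟨K₂, hK₂u, hK₂d, hK₂c⟩ := CHD.exists_lift R₂ hR₂o hR₂d
  refine ⟨K₁, K₂, hK₁u, hK₁d, hK₂u, hK₂d, a, ha01, ha12, ?_⟩
  have per : ∀ α β, (K₁ ⊗ₖ K₂) * (J α β • (pauli α ⊗ₖ pauli β)) * (K₁ ⊗ₖ K₂)ᴴ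
      = ∑ γ, ∑ δ, (R₁ γ α * J α β * R₂ δ β) • (pauli γ ⊗ₖ pauli δ) := by
    intro α β
    rw [Matrix.mul_smul, Matrix.smul_mul, CHD.kron_conjT, ← Matrix.mul_kronecker_mul,
      ← Matrix.mul_kronecker_mul, hK₁c α, hK₂c β, CHD.sum_kron, Finset.smul_sum]
    refine Finset.sum_congr rfl fun γ _ => ?_
    rw [Matrix.smul_kronecker, CHD.kron_sum, Finset.smul_sum, Finset.smul_sum]
    refine Finset.sum_congr rfl fun δ _ => ?_
    rw [Matrix.kronecker_smul, smul_smul, smul_smul]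
    congr 1
    ring
  have swap4 : ∀ (f : Fin 3 → Fin 3 → Fin 3 → Fin 3 → Matrix (Fin 2 × Fin 2) (Fin 2 × Fin 2) ℂ),
      ∑ α, ∑ β, ∑ γ, ∑ δ, f α β γ δ = ∑ γ, ∑ δ, ∑ α, ∑ β, f α β γ δ := by
    intro f
    have h1 : ∀ α : Fin 3, ∑ β, ∑ γ, ∑ δ, f α β γ δ = ∑ γ, ∑ β, ∑ δ, f α β γ δ :=
      fun α => Finset.sum_comm
    simp_rw [h1]
    rw [Finset.sum_comm]
    refine Finset.sum_congr rfl fun γ _ => ?_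
    have h2 : ∀ α : Fin 3, ∑ β, ∑ δ, f α β γ δ = ∑ δ, ∑ β, f α β γ δ :=
      fun α => Finset.sum_comm
    simp_rw [h2]
    rw [Finset.sum_comm]
  calc (K₁ ⊗ₖ K₂) * (∑ α, ∑ β, J α β • (pauli α ⊗ₖ pauli β)) * (K₁ ⊗ₖ K₂)ᴴ
      = ∑ α, ∑ β, (K₁ ⊗ₖ K₂) * (J α β • (pauli α ⊗ₖ pauli β)) * (K₁ ⊗ₖ K₂)ᴴ := by
        simp only [Matrix.mul_sum, Matrix.sum_mul]
    _ = ∑ α, ∑ β, ∑ γ, ∑ δ, (R₁ γ α * J α β * R₂ δ β) • (pauli γ ⊗ₖ pauli δ) :=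
        Finset.sum_congr rfl fun α _ => Finset.sum_congr rfl fun β _ => per α β
    _ = ∑ γ, ∑ δ, ∑ α, ∑ β, (R₁ γ α * J α β * R₂ δ β) • (pauli γ ⊗ₖ pauli δ) := swap4 _
    _ = ∑ γ, ∑ δ, (∑ α, ∑ β, R₁ γ α * J α β * R₂ δ β) • (pauli γ ⊗ₖ pauli δ) := by
        refine Finset.sum_congr rfl fun γ _ => Finset.sum_congr rfl fun δ _ => ?_
        rw [Finset.sum_smul]
        exact Finset.sum_congr rfl fun α _ => by rw [Finset.sum_smul]
    _ = ∑ γ, ∑ δ, ((R₁ * Matrix.of J * R₂ᵀ) γ δ) • (pauli γ ⊗ₖ pauli δ) := by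
        refine Finset.sum_congr rfl fun γ _ => Finset.sum_congr rfl fun δ _ => ?_
        congr 1
        simp only [Matrix.mul_apply, Matrix.transpose_apply, Matrix.of_apply, Finset.sum_mul]
        rw [Finset.sum_comm]
    _ = ∑ γ, ∑ δ, ((Matrix.diagonal a) γ δ) • (pauli γ ⊗ₖ pauli δ) := by rw [hdiag]
    _ = ∑ γ, a γ • (pauli γ ⊗ₖ pauli γ) := by
        refine Finset.sum_congr rfl fun γ _ => ?_
        rw [Finset.sum_eq_single γ
            (fun δ _ hδ => by rw [Matrix.diagonal_apply_ne a (Ne.symm hδ), zero_smul])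
            (fun h => absurd (Finset.mem_univ γ) h), Matrix.diagonal_apply_eq]
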